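/- arXiv:2512.07013 — 7 statements merged into one kernel-verified Lean document; each statement's English description precedes it below -/
import Mathlib

section
/- Let a ≥ 0 and c ≠ 0 be real numbers. Then ∫ max(0, a + c·x) d(gaussianReal 0 1)(x) = a·(1 − Φ(−a/|c|)) + |c|·φ(−a/|c|). -/
open Filter Finset MeasureTheory ProbabilityTheory

/-- The cumulative distribution function of the standard Gaussian measure on `ℝ`. -/
noncomputable def gaussCDF (x : ℝ) : ℝ :=
  ((gaussianReal 0 1) (Set.Iic x)).toReal

/-- The density of the standard Gaussian measure on `ℝ`. -/
noncomputable def gaussPDF (x : ℝ) : ℝ :=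
  Real.exp (-x ^ 2 / 2) / Real.sqrt (2 * Real.pi)

set_option linter.unusedVariables false

lemma gaussianPDFReal_eq_gaussPDF : gaussianPDFReal 0 1 = gaussPDF := by
  ext x
  simp [gaussianPDFReal, gaussPDF, div_eq_inv_mul]

lemma gaussPDF_nonneg (x : ℝ) : 0 ≤ gaussPDF x := by
  rw [← gaussianPDFReal_eq_gaussPDF]; exact gaussianPDFReal_nonneg 0 1 x

lemma gaussPDF_neg (x : ℝ) : gaussPDF (-x) = gaussPDF x := by
  simp [gaussPDF]

lemma integrable_gaussPDF : Integrable gaussPDF := by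
  rw [← gaussianPDFReal_eq_gaussPDF]; exact integrable_gaussianPDFReal 0 1

lemma integrable_mul_gaussPDF : Integrable (fun x => x * gaussPDF x) := by
  have : (fun x : ℝ => x * gaussPDF x)
      = fun x => (Real.sqrt (2*Real.pi))⁻¹ * (x * Real.exp (-(1/2) * x^2)) := by
    ext x; rw [gaussPDF]; ring_nf
  rw [this]
  exact (integrable_mul_exp_neg_mul_sq (by norm_num)).const_mul _

lemma hasDerivAt_neg_gaussPDF (x : ℝ) :
    HasDerivAt (fun y => -gaussPDF y) (x * gaussPDF x) x := by
  have h : HasDerivAt (fun y : ℝ => -(Real.exp (-y^2/2)) / Real.sqrt (2*Real.pi))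
      (x * Real.exp (-x^2/2) / Real.sqrt (2*Real.pi)) x := by
    have h1 : HasDerivAt (fun y : ℝ => -y^2/2) (-x) x := by
      have := (hasDerivAt_pow 2 x).neg.div_const 2
      exact this.congr_deriv (by norm_num; ring)
    have := (h1.exp.neg).div_const (Real.sqrt (2*Real.pi))
    exact this.congr_deriv (by ring)
  have h2 : (fun y => -gaussPDF y) = fun y => -(Real.exp (-y^2/2)) / Real.sqrt (2*Real.pi) := by
    ext y; rw [gaussPDF]; ring
  rw [h2]
  convert h using 1
  rw [gaussPDF]; ring

lemma tendsto_gaussPDF_atTop : Tendsto gaussPDF atTop (nhds 0) := by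
  have h1 : Tendsto (fun x : ℝ => -x^2/2) atTop atBot := by
    have := tendsto_pow_atTop (α := ℝ) (n := 2) two_ne_zero
    exact (this.const_mul_atTop_of_neg (by norm_num : (-(1:ℝ)/2) < 0)).congr (fun x => by ring)
  have := (Real.tendsto_exp_atBot.comp h1).div_const (Real.sqrt (2*Real.pi))
  rw [zero_div] at this
  exact this.congr (fun x => by rw [gaussPDF]; rfl)

lemma integral_gauss (g : ℝ → ℝ) : ∫ x, g x ∂(gaussianReal 0 1) = ∫ x, gaussPDF x * g x := by
  rw [gaussianReal_of_var_ne_zero _ one_ne_zero]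
  have h : gaussianPDF 0 1 = fun x => ((Real.toNNReal (gaussPDF x)) : ENNReal) := by
    ext x
    rw [gaussianPDF, gaussianPDFReal_eq_gaussPDF, ENNReal.ofReal]
  rw [h, integral_withDensity_eq_integral_smul]
  · congr 1; ext x
    rw [NNReal.smul_def, smul_eq_mul, Real.coe_toNNReal _ (gaussPDF_nonneg x)]
  · exact (gaussianPDFReal_eq_gaussPDF ▸ measurable_gaussianPDFReal 0 1).real_toNNReal

lemma integral_total_gaussPDF : ∫ x, gaussPDF x = 1 := by
  rw [← gaussianPDFReal_eq_gaussPDF]; exact integral_gaussianPDFReal_eq_one 0 one_ne_zero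

lemma gaussCDF_eq_integral (t : ℝ) : gaussCDF t = ∫ x in Set.Iic t, gaussPDF x := by
  rw [gaussCDF, gaussianReal_apply_eq_integral 0 one_ne_zero,
    ENNReal.toReal_ofReal (integral_nonneg (fun x => gaussianPDFReal_nonneg 0 1 x)),
    gaussianPDFReal_eq_gaussPDF]

lemma integral_Ioi_mul_gaussPDF (t : ℝ) :
    ∫ x in Set.Ioi t, x * gaussPDF x = gaussPDF t := by
  have := integral_Ioi_of_hasDerivAt_of_tendsto'
    (f := fun y => -gaussPDF y) (f' := fun x => x * gaussPDF x) (a := t)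
    (fun x _ => hasDerivAt_neg_gaussPDF x)
    integrable_mul_gaussPDF.integrableOn
    (tendsto_gaussPDF_atTop.neg.congr' (by filter_upwards with x using rfl))
  rw [this]
  simp [neg_zero]

lemma key (a b : ℝ) (ha : 0 ≤ a) (hb : 0 < b) :
    ∫ x, gaussPDF x * max 0 (a + b * x) =
      a * (1 - gaussCDF (-a / b)) + b * gaussPDF (-a / b) := by
  set t := -a / b with ht
  have hind : (fun x => gaussPDF x * max 0 (a + b * x))
      = Set.indicator (Set.Ici t) (fun x => a * gaussPDF x + b * (x * gaussPDF x)) := by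
    ext x
    simp only [Set.indicator_apply, Set.mem_Ici]
    by_cases hx : t ≤ x
    · rw [if_pos hx]
      have h0 : 0 ≤ a + b * x := by
        have : a + b * t = 0 := by rw [ht]; field_simp; ring
        nlinarith
      rw [max_eq_right h0]; ring
    · rw [if_neg hx]
      push_neg at hx
      have h0 : a + b * x < 0 := by
        have : a + b * t = 0 := by rw [ht]; field_simp; ring
        nlinarith
      rw [max_eq_left h0.le, mul_zero]
  rw [hind, MeasureTheory.integral_indicator measurableSet_Ici]
  rw [MeasureTheory.integral_add
    ((integrable_gaussPDF.const_mul a).integrableOn)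
    ((integrable_mul_gaussPDF.const_mul b).integrableOn),
    integral_const_mul, integral_const_mul]
  have h1 : ∫ x in Set.Ici t, gaussPDF x = 1 - gaussCDF t := by
    have hsplit : (∫ x in Set.Iic t, gaussPDF x) + ∫ x in Set.Ioi t, gaussPDF x
        = ∫ x, gaussPDF x :=
      intervalIntegral.integral_Iic_add_Ioi integrable_gaussPDF.integrableOn
        integrable_gaussPDF.integrableOn
    rw [MeasureTheory.integral_Ici_eq_integral_Ioi, gaussCDF_eq_integral,
      integral_total_gaussPDF] at *
    linarith
  rw [h1, MeasureTheory.integral_Ici_eq_integral_Ioi, integral_Ioi_mul_gaussPDF]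

/-- Expectation of the rectified Gaussian: for `a ≥ 0`, `c ≠ 0`,
`∫ max(0, a + c x) dN(0,1)(x) = a (1 - Φ(-a/|c|)) + |c| φ(-a/|c|)`. -/
theorem integral_max_zero_add_linear_gaussian
    (a c : ℝ) (ha : 0 ≤ a) (hc : c ≠ 0) :
    ∫ x, max 0 (a + c * x) ∂(gaussianReal 0 1) =
      a * (1 - gaussCDF (-a / |c|)) + |c| * gaussPDF (-a / |c|) := by
  rw [integral_gauss]
  rcases lt_or_gt_of_ne hc with hneg | hpos
  · rw [abs_of_neg hneg, ← key a (-c) ha (by linarith),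
      ← integral_neg_eq_self (fun y => gaussPDF y * max 0 (a + -c * y)) volume]
    congr 1 with x
    rw [gaussPDF_neg, neg_mul_neg]
  · rw [abs_of_pos hpos]
    exact key a c ha hpos
end

section
/- Let a > 0 and c ≠ 0 be real numbers. The pushforward of gaussianReal 0 1 under the map x ↦ max(0, a + c·x) equals Φ(−a/|c|)·δ₀ + (gaussianReal a (c²)) restricted to the interval (0,∞), where δ₀ is the Dirac measure at 0 and gaussianReal a (c²) is the Gaussian measure on ℝ with mean a and variance c². In particular, the pushforward measure assigns mass Φ(−a/|c|) to the singleton {0}. -/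
open Filter Finset MeasureTheory ProbabilityTheory

lemma gauss_map_affine (a c : ℝ) :
    Measure.map (fun x : ℝ => a + c * x) (gaussianReal 0 1)
      = gaussianReal a ⟨c ^ 2, sq_nonneg c⟩ := by
  have h1 : (gaussianReal 0 1).map (fun x => c * x) = gaussianReal 0 ⟨c ^ 2, sq_nonneg c⟩ := by
    have := gaussianReal_map_const_mul (μ := 0) (v := 1) c
    rw [this]
    congr 1
    · simp
    · ext
      simp
      rfl
  have h2 : ((gaussianReal 0 1).map (fun x => c * x)).map (fun x => x + a)
      = gaussianReal a ⟨c ^ 2, sq_nonneg c⟩ := by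
    rw [h1]
    have := gaussianReal_map_add_const (μ := 0) (v := ⟨c ^ 2, sq_nonneg c⟩) a
    simpa using this
  rw [Measure.map_map (by fun_prop) (by fun_prop)] at h2
  rw [← h2]
  congr 1
  ext x
  simp [Function.comp, add_comm]

lemma gauss_Iic_zero (a c : ℝ) (hc : c ≠ 0) :
    gaussianReal a ⟨c ^ 2, sq_nonneg c⟩ (Set.Iic 0)
      = gaussianReal 0 1 (Set.Iic (-a / |c|)) := by
  have h := gauss_map_affine a |c|
  have habs : (⟨|c| ^ 2, sq_nonneg _⟩ : NNReal) = (⟨c ^ 2, sq_nonneg c⟩ : NNReal) := by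
    ext; simp [sq_abs]
  rw [habs] at h
  rw [← h, Measure.map_apply (by fun_prop) measurableSet_Iic]
  congr 1
  ext x
  have hpos : 0 < |c| := abs_pos.mpr hc
  simp only [Set.mem_preimage, Set.mem_Iic]
  rw [le_div_iff₀ hpos]
  constructor <;> intro h' <;> nlinarith

/-- The law of the rectified Gaussian `max(0, a + c ε)`,
`ε ~ N(0,1)`, with `a > 0`, `c ≠ 0`, is the zero-truncated Gaussian:
an atom of mass `Φ(-a/|c|)` at `0` plus the Gaussian `N(a, c²)` restricted to
`(0, ∞)`. In particular, the pushforward assigns mass `Φ(-a/|c|)` to `{0}`. -/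
theorem map_rectified_gaussian_eq_truncated
    (a c : ℝ) (ha : 0 < a) (hc : c ≠ 0) :
    (Measure.map (fun x : ℝ => max 0 (a + c * x)) (gaussianReal 0 1) =
      (ENNReal.ofReal (gaussCDF (-a / |c|))) • Measure.dirac (0 : ℝ)
        + (gaussianReal a ⟨c ^ 2, sq_nonneg c⟩).restrict (Set.Ioi 0)) ∧
    (Measure.map (fun x : ℝ => max 0 (a + c * x)) (gaussianReal 0 1)) {0}
      = ENNReal.ofReal (gaussCDF (-a / |c|)) := by
  set ν := gaussianReal a ⟨c ^ 2, sq_nonneg c⟩ with hν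
  have hmeas : Measurable fun x : ℝ => max 0 x := by fun_prop
  have hmap : Measure.map (fun x : ℝ => max 0 (a + c * x)) (gaussianReal 0 1)
      = Measure.map (fun x : ℝ => max 0 x) ν := by
    rw [hν, ← gauss_map_affine a c, Measure.map_map hmeas (by fun_prop)]
    rfl
  have hk' : ENNReal.ofReal (gaussCDF (-a / |c|)) = ν (Set.Iic 0) := by
    rw [gaussCDF, ENNReal.ofReal_toReal (measure_ne_top _ _), hν, gauss_Iic_zero a c hc]
  have heq : Measure.map (fun x : ℝ => max 0 x) ν
      = (ENNReal.ofReal (gaussCDF (-a / |c|))) • Measure.dirac (0 : ℝ)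
        + ν.restrict (Set.Ioi 0) := by
    classical
    ext s hs
    rw [Measure.map_apply hmeas hs]
    have hpre : (fun x : ℝ => max 0 x) ⁻¹' s
        = (if (0:ℝ) ∈ s then Set.Iic (0:ℝ) else ∅) ∪ (s ∩ Set.Ioi 0) := by
      ext x
      by_cases hx : x ≤ 0
      · have hm : max 0 x = 0 := max_eq_left hx
        by_cases h0 : (0:ℝ) ∈ s <;>
          simp [Set.mem_preimage, hm, h0, hx, not_lt.mpr hx]
      · push_neg at hx
        have hm : max 0 x = x := max_eq_right hx.le
        by_cases h0 : (0:ℝ) ∈ s <;> simp [Set.mem_preimage, hm, h0, hx, not_le.mpr hx]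
    have hdisj : Disjoint (if (0:ℝ) ∈ s then Set.Iic (0:ℝ) else ∅) (s ∩ Set.Ioi 0) := by
      by_cases h0 : (0:ℝ) ∈ s
      · simp only [h0, if_true]
        exact (Set.Iic_disjoint_Ioi le_rfl).mono_right Set.inter_subset_right
      · simp [h0]
    rw [hpre, measure_union hdisj (hs.inter measurableSet_Ioi),
      Measure.add_apply, Measure.restrict_apply hs, Measure.smul_apply,
      Measure.dirac_apply' _ hs]
    by_cases h0 : (0:ℝ) ∈ s
    · simp [h0, hk']
    · simp [h0]
  refine ⟨hmap.trans heq, ?_⟩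
  rw [hmap, heq]
  have h01 : ({0} : Set ℝ) ∩ Set.Ioi 0 = ∅ := by
    ext x; simp
  simp [Measure.restrict_apply (measurableSet_singleton (0:ℝ)), h01]
end

section
/- Let ζ₀ ≥ 0, ζ* > 0, γ > 0, σ > 0, and let (A_t), (B_t) be real sequences with A_t > 0 and B_t ≥ 0 for all t, such that A_t → +∞ and B_t → +∞. Define v̄_t = (ζ₀ + γ·ζ*·B_t)/(1 + γ·B_t), φ̄_t = γ·σ·A_t/(1 + γ·B_t), and E_t = v̄_t·(1 − Φ(−|v̄_t/φ̄_t|)) + |φ̄_t|·φ(−|v̄_t/φ̄_t|). Assume (ζ₀ + γ·ζ*·B_t)/(γ·σ·A_t) → L for some L ≥ 0 and A_t/B_t → ρ for some ρ ∈ ℝ. Then E_t → ζ*·(1 − Φ(−L)) + σ·φ(−L)·ρ as t → ∞. -/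
open Filter Finset MeasureTheory ProbabilityTheory

lemma gaussCDF_eq (x : ℝ) : gaussCDF x = ∫ t in Set.Iic x, gaussianPDFReal 0 1 t := by
  rw [gaussCDF, gaussianReal_apply_eq_integral 0 one_ne_zero, ENNReal.toReal_ofReal]
  exact integral_nonneg fun t => gaussianPDFReal_nonneg _ _ _

lemma continuous_gaussCDF : Continuous gaussCDF := by
  have hint : Integrable (gaussianPDFReal 0 1) := integrable_gaussianPDFReal 0 1
  have h := hint.continuous_primitive 0
  have heq : gaussCDF = fun x =>
      (∫ t in (0:ℝ)..x, gaussianPDFReal 0 1 t) + ∫ t in Set.Iic (0:ℝ), gaussianPDFReal 0 1 t := by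
    funext x
    rw [gaussCDF_eq]
    have := intervalIntegral.integral_Iic_sub_Iic (hint.integrableOn (s := Set.Iic 0))
      (hint.integrableOn (s := Set.Iic x))
    linarith
  rw [heq]
  exact h.add continuous_const

lemma continuous_gaussPDF : Continuous gaussPDF := by
  unfold gaussPDF
  exact (Real.continuous_exp.comp (by continuity)).div_const _

/-- Case (1) of the convergence of the expected path-dependent
MAP estimator: if `A t → +∞`, `B t → +∞`,
`(ζ₀ + γ ζ* B t)/(γ σ A t) → L ≥ 0` and `A t / B t → ρ`, then
`E t → ζ* (1 - Φ(-L)) + σ φ(-L) ρ`. -/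
theorem expected_MAP_limit_case1
    (ζ₀ ζs γ σ L ρ : ℝ) (hζ₀ : 0 ≤ ζ₀) (hζs : 0 < ζs) (hγ : 0 < γ) (hσ : 0 < σ)
    (A B : ℕ → ℝ) (hA : ∀ t, 0 < A t) (hB : ∀ t, 0 ≤ B t)
    (hAtop : Tendsto A atTop atTop) (hBtop : Tendsto B atTop atTop)
    (hL : 0 ≤ L)
    (hratio : Tendsto (fun t => (ζ₀ + γ * ζs * B t) / (γ * σ * A t)) atTop (nhds L))
    (hρ : Tendsto (fun t => A t / B t) atTop (nhds ρ)) :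
    Tendsto (fun t =>
        ((ζ₀ + γ * ζs * B t) / (1 + γ * B t)) *
            (1 - gaussCDF (-|((ζ₀ + γ * ζs * B t) / (1 + γ * B t)) /
              (γ * σ * A t / (1 + γ * B t))|)) +
          |γ * σ * A t / (1 + γ * B t)| *
            gaussPDF (-|((ζ₀ + γ * ζs * B t) / (1 + γ * B t)) /
              (γ * σ * A t / (1 + γ * B t))|))
      atTop (nhds (ζs * (1 - gaussCDF (-L)) + σ * gaussPDF (-L) * ρ)) := by
  have hden : ∀ t, (0:ℝ) < 1 + γ * B t := fun t => by
    have := mul_nonneg hγ.le (hB t); linarith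
  have hφpos : ∀ t, (0:ℝ) < γ * σ * A t / (1 + γ * B t) := fun t => by
    have := hA t; have := hden t; positivity
  -- the ratio simplifies
  have hratEq : ∀ t, ((ζ₀ + γ * ζs * B t) / (1 + γ * B t)) /
      (γ * σ * A t / (1 + γ * B t)) = (ζ₀ + γ * ζs * B t) / (γ * σ * A t) := by
    intro t
    have h1 : (1 + γ * B t) ≠ 0 := (hden t).ne'
    have h2 : γ * σ * A t ≠ 0 := by have := hA t; positivity
    field_simp
  have hBpos : ∀ᶠ t in atTop, 0 < B t := hBtop.eventually_gt_atTop 0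
  -- -|ratio| → -L
  have hfr : Tendsto (fun t => -|(ζ₀ + γ * ζs * B t) / (γ * σ * A t)|) atTop (nhds (-L)) := by
    have h1 : Tendsto (fun t => |(ζ₀ + γ * ζs * B t) / (γ * σ * A t)|) atTop (nhds |L|) :=
      hratio.abs
    rw [abs_of_nonneg hL] at h1
    exact h1.neg
  -- v̄ → ζ*
  have hvbar : Tendsto (fun t => (ζ₀ + γ * ζs * B t) / (1 + γ * B t)) atTop (nhds ζs) := by
    have hnum : Tendsto (fun t => ζ₀ / B t + γ * ζs) atTop (nhds (γ * ζs)) := by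
      have h0 : Tendsto (fun t => ζ₀ / B t) atTop (nhds 0) := tendsto_const_nhds.div_atTop hBtop
      simpa using h0.add tendsto_const_nhds
    have hdent : Tendsto (fun t => 1 / B t + γ) atTop (nhds γ) := by
      have h0 : Tendsto (fun t => (1:ℝ) / B t) atTop (nhds 0) :=
        tendsto_const_nhds.div_atTop hBtop
      simpa using h0.add tendsto_const_nhds
    have h2 := hnum.div hdent hγ.ne'
    rw [mul_comm γ ζs, mul_div_assoc, div_self hγ.ne', mul_one] at h2
    refine Tendsto.congr' ?_ h2
    filter_upwards [hBpos] with t ht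
    have h1 : (1 + γ * B t) ≠ 0 := (hden t).ne'
    field_simp
    simp only [Pi.div_apply]
    field_simp
  -- φ̄ → σρ
  have hφbar : Tendsto (fun t => γ * σ * A t / (1 + γ * B t)) atTop (nhds (σ * ρ)) := by
    have hnum : Tendsto (fun t => γ * σ * (A t / B t)) atTop (nhds (γ * σ * ρ)) :=
      tendsto_const_nhds.mul hρ
    have hdent : Tendsto (fun t => 1 / B t + γ) atTop (nhds γ) := by
      have h0 : Tendsto (fun t => (1:ℝ) / B t) atTop (nhds 0) :=
        tendsto_const_nhds.div_atTop hBtop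
      simpa using h0.add tendsto_const_nhds
    have h2 := hnum.div hdent hγ.ne'
    have hval : γ * σ * ρ / γ = σ * ρ := by field_simp
    rw [hval] at h2
    refine Tendsto.congr' ?_ h2
    filter_upwards [hBpos] with t ht
    field_simp
    simp only [Pi.div_apply]
    field_simp
  -- assemble
  have hCDF : Tendsto (fun t => gaussCDF (-|(ζ₀ + γ * ζs * B t) / (γ * σ * A t)|)) atTop
      (nhds (gaussCDF (-L))) := (continuous_gaussCDF.continuousAt.tendsto).comp hfr
  have hPDF : Tendsto (fun t => gaussPDF (-|(ζ₀ + γ * ζs * B t) / (γ * σ * A t)|)) atTop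
      (nhds (gaussPDF (-L))) := (continuous_gaussPDF.continuousAt.tendsto).comp hfr
  have hmain : Tendsto (fun t =>
      ((ζ₀ + γ * ζs * B t) / (1 + γ * B t)) *
          (1 - gaussCDF (-|(ζ₀ + γ * ζs * B t) / (γ * σ * A t)|)) +
        (γ * σ * A t / (1 + γ * B t)) *
          gaussPDF (-|(ζ₀ + γ * ζs * B t) / (γ * σ * A t)|)) atTop
      (nhds (ζs * (1 - gaussCDF (-L)) + σ * ρ * gaussPDF (-L))) :=
    (hvbar.mul (tendsto_const_nhds.sub hCDF)).add (hφbar.mul hPDF)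
  have hpt : ζs * (1 - gaussCDF (-L)) + σ * ρ * gaussPDF (-L)
      = ζs * (1 - gaussCDF (-L)) + σ * gaussPDF (-L) * ρ := by ring
  rw [hpt] at hmain
  refine hmain.congr fun t => ?_
  rw [hratEq t, abs_of_pos (hφpos t)]
end

section
/- Let ζ₀ ≥ 0, ζ* > 0, γ > 0, σ > 0, and let (A_t), (B_t) be real sequences with A_t ≠ 0 and B_t ≥ 0 for all t, such that A_t → L₁ for some L₁ ∈ ℝ and B_t → +∞. Define v̄_t = (ζ₀ + γ·ζ*·B_t)/(1 + γ·B_t), φ̄_t = γ·σ·A_t/(1 + γ·B_t), and E_t = v̄_t·(1 − Φ(−|v̄_t/φ̄_t|)) + |φ̄_t|·φ(−|v̄_t/φ̄_t|). Then E_t → ζ* as t → ∞. -/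
open Filter Finset MeasureTheory ProbabilityTheory

lemma gaussCDF_eq_cdf (x : ℝ) : gaussCDF x = cdf (gaussianReal 0 1) x := by
  rw [cdf_eq_real]; rfl

lemma gaussCDF_tendsto_atBot : Tendsto gaussCDF atBot (nhds 0) := by
  have h := tendsto_cdf_atBot (gaussianReal 0 1)
  exact h.congr fun x => (gaussCDF_eq_cdf x).symm

lemma gaussPDF_le (x : ℝ) : gaussPDF x ≤ 1 / Real.sqrt (2 * Real.pi) := by
  unfold gaussPDF
  have h1 : Real.exp (-x ^ 2 / 2) ≤ 1 := Real.exp_le_one_iff.mpr (by nlinarith [sq_nonneg x])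
  have h2 : 0 < Real.sqrt (2 * Real.pi) := Real.sqrt_pos.mpr (by positivity)
  exact div_le_div₀ zero_le_one h1 h2 le_rfl

/-- Case (3) of the convergence of the expected path-dependent
MAP estimator: if `A t → L₁` finite and `B t → +∞`, then `E t → ζ*`. -/
theorem expected_MAP_limit_case3
    (ζ₀ ζs γ σ L₁ : ℝ) (hζ₀ : 0 ≤ ζ₀) (hζs : 0 < ζs) (hγ : 0 < γ) (hσ : 0 < σ)
    (A B : ℕ → ℝ) (hA : ∀ t, A t ≠ 0) (hB : ∀ t, 0 ≤ B t)
    (hAlim : Tendsto A atTop (nhds L₁)) (hBtop : Tendsto B atTop atTop) :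
    Tendsto (fun t =>
        ((ζ₀ + γ * ζs * B t) / (1 + γ * B t)) *
            (1 - gaussCDF (-|((ζ₀ + γ * ζs * B t) / (1 + γ * B t)) /
              (γ * σ * A t / (1 + γ * B t))|)) +
          |γ * σ * A t / (1 + γ * B t)| *
            gaussPDF (-|((ζ₀ + γ * ζs * B t) / (1 + γ * B t)) /
              (γ * σ * A t / (1 + γ * B t))|))
      atTop (nhds ζs) := by
  set v : ℕ → ℝ := fun t => (ζ₀ + γ * ζs * B t) / (1 + γ * B t) with hv_def
  set φf : ℕ → ℝ := fun t => γ * σ * A t / (1 + γ * B t) with hφ_def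
  have hD : ∀ t, 0 < 1 + γ * B t := fun t => by nlinarith [mul_nonneg hγ.le (hB t)]
  have hDtop : Tendsto (fun t => 1 + γ * B t) atTop atTop :=
    tendsto_atTop_add_const_left _ 1 (hBtop.const_mul_atTop hγ)
  -- v → ζs
  have hveq : ∀ t, v t = ζs + (ζ₀ - ζs) / (1 + γ * B t) := by
    intro t
    rw [hv_def]
    rw [div_eq_iff (hD t).ne', add_mul, div_mul_cancel₀ _ (hD t).ne']
    ring
  have hv : Tendsto v atTop (nhds ζs) := by
    have : Tendsto (fun t => ζs + (ζ₀ - ζs) / (1 + γ * B t)) atTop (nhds (ζs + 0)) :=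
      tendsto_const_nhds.add (tendsto_const_nhds.div_atTop hDtop)
    rw [add_zero] at this
    exact this.congr fun t => (hveq t).symm
  -- φ → 0
  have hφ : Tendsto φf atTop (nhds 0) :=
    (tendsto_const_nhds.mul hAlim).div_atTop hDtop
  have hφne : ∀ t, φf t ≠ 0 := fun t =>
    div_ne_zero (mul_ne_zero (mul_ne_zero hγ.ne' hσ.ne') (hA t)) (hD t).ne'
  -- |φ|⁻¹ → atTop
  have habsφ : Tendsto (fun t => |φf t|) atTop (nhdsWithin 0 (Set.Ioi 0)) := by
    refine tendsto_nhdsWithin_of_tendsto_nhds_of_eventually_within _ ?_ ?_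
    · have := hφ.abs; simpa using this
    · exact Eventually.of_forall fun t => abs_pos.mpr (hφne t)
  have hinv : Tendsto (fun t => (|φf t|)⁻¹) atTop atTop :=
    tendsto_inv_nhdsGT_zero.comp habsφ
  -- ratio → atTop
  have hvabs : Tendsto (fun t => |v t|) atTop (nhds ζs) := by
    have := hv.abs; rwa [abs_of_pos hζs] at this
  have hratio : Tendsto (fun t => |v t / φf t|) atTop atTop := by
    have : Tendsto (fun t => |v t| * (|φf t|)⁻¹) atTop atTop :=
      Tendsto.pos_mul_atTop hζs hvabs hinv
    exact this.congr fun t => by rw [abs_div (v t) (φf t), div_eq_mul_inv]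
  have hr : Tendsto (fun t => -|v t / φf t|) atTop atBot :=
    tendsto_neg_atTop_atBot.comp hratio
  -- CDF term → 0
  have hCDF : Tendsto (fun t => gaussCDF (-|v t / φf t|)) atTop (nhds 0) :=
    gaussCDF_tendsto_atBot.comp hr
  -- second term → 0
  have hsecond : Tendsto (fun t => |φf t| * gaussPDF (-|v t / φf t|)) atTop (nhds 0) := by
    have hb : Tendsto (fun t => |φf t| * (1 / Real.sqrt (2 * Real.pi))) atTop (nhds 0) := by
      have := (hφ.abs).mul_const (1 / Real.sqrt (2 * Real.pi))
      simpa using this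
    refine squeeze_zero (fun t => mul_nonneg (abs_nonneg _) (gaussPDF_nonneg _)) ?_ hb
    exact fun t => mul_le_mul_of_nonneg_left (gaussPDF_le _) (abs_nonneg _)
  have hmain : Tendsto (fun t => v t * (1 - gaussCDF (-|v t / φf t|)) +
      |φf t| * gaussPDF (-|v t / φf t|)) atTop (nhds (ζs * (1 - 0) + 0)) :=
    (hv.mul (tendsto_const_nhds.sub hCDF)).add hsecond
  simpa using hmain
end

section
/- Let ζ₀ ≥ 0, ζ* > 0, γ > 0, σ > 0, and let (A_t), (B_t) be real sequences with A_t > 0 and B_t ≥ 0 for all t, such that A_t → +∞ and B_t → L₂ for some L₂ ≥ 0. Define v̄_t = (ζ₀ + γ·ζ*·B_t)/(1 + γ·B_t), φ̄_t = γ·σ·A_t/(1 + γ·B_t), and E_t = v̄_t·(1 − Φ(−|v̄_t/φ̄_t|)) + |φ̄_t|·φ(−|v̄_t/φ̄_t|). Then E_t → +∞ as t → ∞. -/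
open Filter Finset MeasureTheory ProbabilityTheory

/-- Case (4) of the convergence of the expected path-dependent
MAP estimator: if `A t → +∞` and `B t → L₂` finite, then `E t → +∞`. -/
theorem expected_MAP_limit_case4
    (ζ₀ ζs γ σ L₂ : ℝ) (hζ₀ : 0 ≤ ζ₀) (hζs : 0 < ζs) (hγ : 0 < γ) (hσ : 0 < σ)
    (A B : ℕ → ℝ) (hA : ∀ t, 0 < A t) (hB : ∀ t, 0 ≤ B t)
    (hAtop : Tendsto A atTop atTop) (hL₂ : 0 ≤ L₂)
    (hBlim : Tendsto B atTop (nhds L₂)) :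
    Tendsto (fun t =>
        ((ζ₀ + γ * ζs * B t) / (1 + γ * B t)) *
            (1 - gaussCDF (-|((ζ₀ + γ * ζs * B t) / (1 + γ * B t)) /
              (γ * σ * A t / (1 + γ * B t))|)) +
          |γ * σ * A t / (1 + γ * B t)| *
            gaussPDF (-|((ζ₀ + γ * ζs * B t) / (1 + γ * B t)) /
              (γ * σ * A t / (1 + γ * B t))|))
      atTop atTop := by

  have hD : ∀ t, 0 < 1 + γ * B t := fun t => by nlinarith [mul_nonneg hγ.le (hB t)]
  have hDL : 0 < 1 + γ * L₂ := by nlinarith [mul_nonneg hγ.le hL₂]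
  have hDlim : Tendsto (fun t => 1 + γ * B t) atTop (nhds (1 + γ * L₂)) :=
    tendsto_const_nhds.add (tendsto_const_nhds.mul hBlim)
  set φb : ℕ → ℝ := fun t => γ * σ * A t / (1 + γ * B t) with hφbdef
  set vb : ℕ → ℝ := fun t => (ζ₀ + γ * ζs * B t) / (1 + γ * B t) with hvbdef
  have hφbpos : ∀ t, 0 < φb t := fun t =>
    div_pos (by have := hA t; positivity) (hD t)
  have hφbtop : Tendsto φb atTop atTop := by
    have h1 : Tendsto (fun t => γ * σ * A t) atTop atTop :=
      hAtop.const_mul_atTop (by positivity)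
    have h2 : Tendsto (fun t => (1 + γ * B t)⁻¹) atTop (nhds ((1 + γ * L₂)⁻¹)) :=
      hDlim.inv₀ hDL.ne'
    have := h1.atTop_mul_pos (inv_pos.mpr hDL) h2
    simpa [hφbdef, div_eq_mul_inv] using this
  have hvblim : Tendsto vb atTop (nhds ((ζ₀ + γ * ζs * L₂) / (1 + γ * L₂))) :=
    (tendsto_const_nhds.add (tendsto_const_nhds.mul hBlim)).div hDlim hDL.ne'
  have hratio : Tendsto (fun t => vb t / φb t) atTop (nhds 0) :=
    hvblim.div_atTop hφbtop
  have habs : Tendsto (fun t => -|vb t / φb t|) atTop (nhds 0) := by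
    have := hratio.abs.neg
    simpa using this
  have hpdfcont : Continuous gaussPDF := by
    unfold gaussPDF
    fun_prop
  have hpdf : Tendsto (fun t => gaussPDF (-|vb t / φb t|)) atTop (nhds (gaussPDF 0)) :=
    (hpdfcont.tendsto 0).comp habs
  have hpdf0 : 0 < gaussPDF 0 := by
    unfold gaussPDF
    positivity
  have hsecond : Tendsto (fun t => |φb t| * gaussPDF (-|vb t / φb t|)) atTop atTop := by
    have h := hφbtop.atTop_mul_pos hpdf0 hpdf
    exact h.congr fun t => by rw [abs_of_pos (hφbpos t)]
  refine tendsto_atTop_mono (fun t => ?_) hsecond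
  have hvnn : 0 ≤ vb t := div_nonneg (by nlinarith [mul_nonneg (mul_nonneg hγ.le hζs.le) (hB t)]) (hD t).le
  have hcdf : gaussCDF (-|vb t / φb t|) ≤ 1 := by
    unfold gaussCDF
    have h1 : (gaussianReal 0 1) (Set.Iic (-|vb t / φb t|)) ≤ 1 := prob_le_one
    have := ENNReal.toReal_mono (by simp) h1
    simpa using this
  have h0 : 0 ≤ vb t * (1 - gaussCDF (-|vb t / φb t|)) :=
    mul_nonneg hvnn (by linarith)
  show |φb t| * gaussPDF (-|vb t / φb t|) ≤
    vb t * (1 - gaussCDF (-|vb t / φb t|)) + |φb t| * gaussPDF (-|vb t / φb t|)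
  linarith
end

section
/- Let γ > 0 and ζ* ∈ ℝ, let (z_t)_{t≥0} be a real sequence, and define (V_t)_{t≥0} by V_0 ∈ ℝ and V_{t+1} = (V_t + γ·ζ*·z_t²)/(1 + γ·z_t²). (i) If z_t → L for some L ≠ 0, or if |z_t| → +∞, then V_t → ζ*. (ii) If z_t → 0, then V_t converges, and its limit equals ζ* + (V_0 − ζ*)·P, where P = lim_{t→∞} ∏_{h=0}^{t−1}(1 + γ·z_h²)^{−1} (this limit exists because the reciprocal partial products form a nonincreasing sequence in (0,1]). -/
open Filter Finset

/-- Convergence of the path-independent expected belief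
dynamics `V (t+1) = (V t + γ ζ* (z t)²) / (1 + γ (z t)²)`:
(i) if `z t → L ≠ 0` or `|z t| → +∞`, then `V t → ζ*`;
(ii) if `z t → 0`, then the reciprocal partial products converge to some `P`
and `V t → ζ* + (V 0 - ζ*) P`. -/
theorem pathIndependent_belief_convergence
    (γ ζs : ℝ) (hγ : 0 < γ) (z : ℕ → ℝ) (V : ℕ → ℝ)
    (hrec : ∀ t, V (t + 1) = (V t + γ * ζs * (z t) ^ 2) / (1 + γ * (z t) ^ 2)) :
    (((∃ L : ℝ, L ≠ 0 ∧ Tendsto z atTop (nhds L)) ∨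
        Tendsto (fun t => |z t|) atTop atTop) →
      Tendsto V atTop (nhds ζs)) ∧
    (Tendsto z atTop (nhds 0) →
      ∃ P : ℝ,
        Tendsto (fun t => ∏ h ∈ Finset.range t, (1 + γ * (z h) ^ 2)⁻¹)
          atTop (nhds P) ∧
        Tendsto V atTop (nhds (ζs + (V 0 - ζs) * P))) := by
  have hpos : ∀ h : ℕ, 0 < 1 + γ * (z h) ^ 2 := by
    intro h; positivity
  set p : ℕ → ℝ := fun t => ∏ h ∈ Finset.range t, (1 + γ * (z h) ^ 2)⁻¹ with hp
  have hppos : ∀ t, 0 < p t := fun t => Finset.prod_pos fun h _ => inv_pos.2 (hpos h)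
  have hstep : ∀ t, p (t + 1) = p t * (1 + γ * (z t) ^ 2)⁻¹ := by
    intro t; simp [hp, Finset.prod_range_succ]; ring
  have hV : ∀ t, V t = ζs + (V 0 - ζs) * p t := by
    intro t
    induction t with
    | zero => simp [hp]
    | succ t ih =>
      rw [hrec t, ih, hstep t]
      have h2 := (hpos t).ne'
      field_simp
      ring
  have hanti : Antitone p := by
    apply antitone_nat_of_succ_le
    intro t
    rw [hstep t]
    have hinv : (1 + γ * (z t) ^ 2)⁻¹ ≤ 1 := by
      apply inv_le_one_of_one_le₀
      nlinarith [sq_nonneg (z t)]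
    calc p t * (1 + γ * (z t) ^ 2)⁻¹ ≤ p t * 1 :=
          mul_le_mul_of_nonneg_left hinv (hppos t).le
      _ = p t := mul_one _
  -- auxiliary: V tendsto follows from p tendsto
  have hVtend : ∀ P : ℝ, Tendsto p atTop (nhds P) →
      Tendsto V atTop (nhds (ζs + (V 0 - ζs) * P)) := by
    intro P hP
    have : Tendsto (fun t => ζs + (V 0 - ζs) * p t) atTop (nhds (ζs + (V 0 - ζs) * P)) :=
      tendsto_const_nhds.add (tendsto_const_nhds.mul hP)
    exact this.congr fun t => (hV t).symm
  constructor
  · rintro h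
    -- obtain c > 0 and N with z t ^ 2 ≥ c for t ≥ N
    have hc : ∃ c : ℝ, 0 < c ∧ ∀ᶠ t in atTop, c ≤ (z t) ^ 2 := by
      rcases h with ⟨L, hL, hzL⟩ | habs
      · refine ⟨(|L| / 2) ^ 2, by positivity, ?_⟩
        have habs : Tendsto (fun t => |z t|) atTop (nhds |L|) := hzL.abs
        have hgt : ∀ᶠ t in atTop, |L| / 2 < |z t| := by
          have : |L| / 2 < |L| := by
            have := abs_pos.2 hL; linarith
          exact habs.eventually (eventually_gt_nhds this)
        filter_upwards [hgt] with t ht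
        have h0 : (0:ℝ) ≤ |L| / 2 := by positivity
        calc (|L| / 2) ^ 2 ≤ |z t| ^ 2 := by
              apply pow_le_pow_left₀ h0 ht.le
          _ = (z t) ^ 2 := sq_abs _
      · refine ⟨1, one_pos, ?_⟩
        filter_upwards [habs.eventually_ge_atTop 1] with t ht
        calc (1:ℝ) = 1 ^ 2 := by norm_num
          _ ≤ |z t| ^ 2 := by apply pow_le_pow_left₀ zero_le_one ht
          _ = (z t) ^ 2 := sq_abs _
    obtain ⟨c, hc0, hev⟩ := hc
    obtain ⟨N, hN⟩ := eventually_atTop.1 hev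
    set r : ℝ := (1 + γ * c)⁻¹ with hr
    have hr0 : 0 ≤ r := by positivity
    have hr1 : r < 1 := by
      rw [hr, inv_lt_one_iff₀]
      right; nlinarith
    -- p (N + k) ≤ p N * r ^ k
    have hbound : ∀ k, p (N + k) ≤ p N * r ^ k := by
      intro k
      have hsplit : p (N + k) = p N * ∏ i ∈ Finset.range k, (1 + γ * (z (N + i)) ^ 2)⁻¹ := by
        simp [hp, Finset.prod_range_add]; ring
      rw [hsplit]
      apply mul_le_mul_of_nonneg_left _ (hppos N).le
      calc (∏ i ∈ Finset.range k, (1 + γ * (z (N + i)) ^ 2)⁻¹)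
          ≤ ∏ _i ∈ Finset.range k, r := by
            apply Finset.prod_le_prod
            · intro i _; exact (inv_pos.2 (hpos _)).le
            · intro i _
              apply inv_anti₀ (by positivity)
              have := hN (N + i) (Nat.le_add_right _ _)
              nlinarith
        _ = r ^ k := by simp
    have hp0 : Tendsto p atTop (nhds 0) := by
      rw [← tendsto_add_atTop_iff_nat N]
      have hub : Tendsto (fun k => p N * r ^ k) atTop (nhds 0) := by
        have := (tendsto_pow_atTop_nhds_zero_of_lt_one hr0 hr1).const_mul (p N)
        simpa using this
      apply squeeze_zero (fun k => (hppos _).le) (fun k => ?_) hub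
      rw [add_comm]
      exact hbound k
    have := hVtend 0 hp0
    simpa using this
  · intro _
    have hbdd : BddBelow (Set.range p) := ⟨0, by rintro x ⟨t, rfl⟩; exact (hppos t).le⟩
    refine ⟨⨅ t, p t, ?_, ?_⟩
    · exact tendsto_atTop_ciInf hanti hbdd
    · exact hVtend _ (tendsto_atTop_ciInf hanti hbdd)
end

section
/- Let n ≥ 1 and, for each i ∈ {1,…,n}, let χ_i > 0 and κ_i < 0 be real constants, and let d > 0. If w > 0 satisfies ∑_{i=1}^n χ_i · w^{κ_i} = d, then min_{1≤i≤n} (d/(n·χ_i))^{1/κ_i} ≤ w ≤ max_{1≤i≤n} (d/(n·χ_i))^{1/κ_i}. -/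
open Filter Finset

/-- Bounds on the equilibrium wage: if `w > 0` solves the
labor-market clearing condition `∑ i, χ i * w ^ κ i = d` with `χ i > 0`,
`κ i < 0` and `d > 0`, then
`min_i (d / (n χ i))^(1/κ i) ≤ w ≤ max_i (d / (n χ i))^(1/κ i)`. -/
theorem equilibrium_wage_bounds
    (n : ℕ) (hn : 0 < n) (χ κ : Fin n → ℝ)
    (hχ : ∀ i, 0 < χ i) (hκ : ∀ i, κ i < 0)
    (d w : ℝ) (hd : 0 < d) (hw : 0 < w)
    (heq : ∑ i, χ i * w ^ (κ i) = d) :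
    (Finset.univ.inf' ⟨⟨0, hn⟩, Finset.mem_univ _⟩
        (fun i => (d / (n * χ i)) ^ (κ i)⁻¹) ≤ w) ∧
    (w ≤ Finset.univ.sup' ⟨⟨0, hn⟩, Finset.mem_univ _⟩
        (fun i => (d / (n * χ i)) ^ (κ i)⁻¹)) := by
  have hne : (Finset.univ : Finset (Fin n)).Nonempty := ⟨⟨0, hn⟩, Finset.mem_univ _⟩
  have hnpos : (0 : ℝ) < n := Nat.cast_pos.mpr hn
  have hsum : ∑ _i : Fin n, d / n = d := by
    rw [Finset.sum_const, Finset.card_univ, Fintype.card_fin, nsmul_eq_mul]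
    field_simp
  constructor
  · -- lower bound: some j has χ j * w ^ κ j ≤ d / n
    obtain ⟨j, -, hj⟩ := Finset.exists_le_of_sum_le hne
      (by rw [heq, hsum] : ∑ i, χ i * w ^ (κ i) ≤ ∑ _i : Fin n, d / n)
    refine le_trans (Finset.inf'_le _ (Finset.mem_univ j)) ?_
    rw [Real.rpow_inv_le_iff_of_neg (div_pos hd (mul_pos hnpos (hχ j))) hw (hκ j)]
    rw [le_div_iff₀ (mul_pos hnpos (hχ j))]
    rw [le_div_iff₀ hnpos] at hj
    nlinarith [hj]
  · -- upper bound: some j has d / n ≤ χ j * w ^ κ j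
    obtain ⟨j, -, hj⟩ := Finset.exists_le_of_sum_le hne
      (by rw [heq, hsum] : ∑ _i : Fin n, d / n ≤ ∑ i, χ i * w ^ (κ i))
    refine le_trans ?_ (Finset.le_sup' _ (Finset.mem_univ j))
    rw [Real.le_rpow_inv_iff_of_neg hw (div_pos hd (mul_pos hnpos (hχ j))) (hκ j)]
    rw [div_le_iff₀ (mul_pos hnpos (hχ j))]
    rw [div_le_iff₀ hnpos] at hj
    nlinarith [hj]
end
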